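/- arXiv:2509.22140 — 6 statements merged into one kernel-verified Lean document; each statement's English description precedes it below -/
import Mathlib

section
/- Let d ≥ 3 be an integer and let w_e, w_g : [0,∞) → ℝ_{>0} be positive differentiable functions with w_e(t) ≥ w_g(t) for all t, w_e(t) - w_g(t) = (w_e(0) - w_g(0)) e^{-t}, and w_g'(t) ≥ -(1 - (d-2)/d) w_g(t) for all t. Then 0 ≤ w_e(t)/w_g(t) - 1 ≤ (w_e(0)/w_g(0) - 1) e^{-((d-2)/d) t}, hence lim_{t→∞} w_e(t)/w_g(t) = 1. -/
/-- Ratio of two leaf weights sharing a vertex of degree `d ≥ 3`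
converges exponentially to 1. -/
theorem stmt3 (d : ℕ) (hd : 3 ≤ d) (we wg : ℝ → ℝ)
    (hpos_e : ∀ t : ℝ, 0 ≤ t → 0 < we t) (hpos_g : ∀ t : ℝ, 0 ≤ t → 0 < wg t)
    (hge : ∀ t : ℝ, 0 ≤ t → wg t ≤ we t)
    (hdiff : ∀ t : ℝ, 0 ≤ t → we t - wg t = (we 0 - wg 0) * Real.exp (-t))
    (hderiv : ∀ t : ℝ, 0 ≤ t → DifferentiableAt ℝ wg t ∧
      -(1 - ((d : ℝ) - 2) / d) * wg t ≤ deriv wg t) :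
    (∀ t : ℝ, 0 ≤ t →
        0 ≤ we t / wg t - 1 ∧
          we t / wg t - 1 ≤ (we 0 / wg 0 - 1) * Real.exp (-(((d : ℝ) - 2) / d) * t)) ∧
      Filter.Tendsto (fun t => we t / wg t) Filter.atTop (nhds 1) := by
  have hd3 : (3 : ℝ) ≤ (d : ℝ) := by exact_mod_cast hd
  have hdpos : (0 : ℝ) < (d : ℝ) := by linarith
  set c : ℝ := 1 - ((d : ℝ) - 2) / d with hc
  have hcval : c = 2 / d := by
    rw [hc, eq_div_iff hdpos.ne', sub_mul, div_mul_cancel₀ _ hdpos.ne']; ring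
  have hcpos : 0 < c := by rw [hcval]; positivity
  set α : ℝ := ((d : ℝ) - 2) / d with hα
  have hαpos : 0 < α := by rw [hα]; apply div_pos <;> linarith
  have hαc : α + c = 1 := by simp [hc]
  -- wg 0 * exp (-c*t) ≤ wg t for t ≥ 0
  have key : ∀ t : ℝ, 0 ≤ t → wg 0 * Real.exp (-c * t) ≤ wg t := by
    intro t ht
    set g : ℝ → ℝ := fun s => wg s * Real.exp (c * s) with hg
    have hmono : MonotoneOn g (Set.Ici (0 : ℝ)) := by
      have hderivg : ∀ s ∈ interior (Set.Ici (0 : ℝ)),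
          HasDerivAt g (deriv wg s * Real.exp (c * s) + wg s * (Real.exp (c * s) * c)) s := by
        intro s hs
        rw [interior_Ici] at hs
        have h1 := (hderiv s hs.le).1
        have h2 : HasDerivAt (fun s : ℝ => Real.exp (c * s)) (Real.exp (c * s) * c) s := by
          simpa using ((hasDerivAt_id s).const_mul c).exp
        exact (h1.hasDerivAt.mul h2)
      apply monotoneOn_of_deriv_nonneg (convex_Ici 0)
      · intro s hs
        exact ((hderiv s hs).1.continuousAt.mul
          (Real.continuous_exp.comp (continuous_const.mul continuous_id)).continuousAt).continuousWithinAt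
      · intro s hs
        rw [interior_Ici] at hs
        exact ((hderivg s (by rwa [interior_Ici])).differentiableAt).differentiableWithinAt
      · intro s hs
        rw [(hderivg s hs).deriv]
        rw [interior_Ici] at hs
        have h2 := (hderiv s hs.le).2
        have hgpos := (hpos_g s hs.le)
        have hexp : 0 < Real.exp (c * s) := Real.exp_pos _
        nlinarith [mul_le_mul_of_nonneg_right h2 hexp.le]
    have := hmono (Set.self_mem_Ici) (Set.mem_Ici.2 ht) ht
    simp only [hg, mul_zero, Real.exp_zero, mul_one] at this
    calc wg 0 * Real.exp (-c * t) ≤ (wg t * Real.exp (c * t)) * Real.exp (-c * t) := by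
          apply mul_le_mul_of_nonneg_right this (Real.exp_pos _).le
      _ = wg t := by
          rw [mul_assoc, ← Real.exp_add]; ring_nf; simp
  -- main bound
  have main : ∀ t : ℝ, 0 ≤ t →
      0 ≤ we t / wg t - 1 ∧
        we t / wg t - 1 ≤ (we 0 / wg 0 - 1) * Real.exp (-α * t) := by
    intro t ht
    have hgt := hpos_g t ht
    have hg0 := hpos_g 0 le_rfl
    constructor
    · have := hge t ht
      rw [sub_nonneg, le_div_iff₀ hgt]
      linarith
    · rw [div_sub_one (ne_of_gt hgt), div_sub_one (ne_of_gt hg0), div_mul_eq_mul_div,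
        div_le_div_iff₀ hgt hg0]
      rw [hdiff t ht]
      have hD : 0 ≤ we 0 - wg 0 := by linarith [hge 0 le_rfl]
      have hkey := key t ht
      have : (we 0 - wg 0) * (Real.exp (-α * t) * (wg 0 * Real.exp (-c * t)))
          ≤ (we 0 - wg 0) * (Real.exp (-α * t) * wg t) := by
        apply mul_le_mul_of_nonneg_left _ hD
        exact mul_le_mul_of_nonneg_left hkey (Real.exp_pos _).le
      calc (we 0 - wg 0) * Real.exp (-t) * wg 0
            = (we 0 - wg 0) * (Real.exp (-α * t) * (wg 0 * Real.exp (-c * t))) := by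
            rw [show (-t : ℝ) = -α * t + -c * t by linear_combination (-t) * hαc,
              Real.exp_add]; ring
        _ ≤ (we 0 - wg 0) * (Real.exp (-α * t) * wg t) := this
        _ = (we 0 - wg 0) * Real.exp (-α * t) * wg t := by ring
  refine ⟨main, ?_⟩
  -- squeeze
  have hupper : Filter.Tendsto (fun t => 1 + (we 0 / wg 0 - 1) * Real.exp (-α * t))
      Filter.atTop (nhds 1) := by
    have h1 : Filter.Tendsto (fun t : ℝ => -α * t) Filter.atTop Filter.atBot := by
      exact Filter.Tendsto.const_mul_atTop_of_neg (neg_lt_zero.2 hαpos) Filter.tendsto_id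
    have h2 := Real.tendsto_exp_atBot.comp h1
    have h3 : Filter.Tendsto (fun t => (we 0 / wg 0 - 1) * Real.exp (-α * t))
        Filter.atTop (nhds 0) := by
      simpa using h2.const_mul (we 0 / wg 0 - 1)
    have h4 : Filter.Tendsto (fun t : ℝ => 1 + (we 0 / wg 0 - 1) * Real.exp (-α * t))
        Filter.atTop (nhds (1 + 0)) := tendsto_const_nhds.add h3
    simpa using h4
  refine tendsto_of_tendsto_of_tendsto_of_le_of_le' (tendsto_const_nhds : Filter.Tendsto
      (fun _ : ℝ => (1 : ℝ)) Filter.atTop (nhds 1)) hupper ?_ ?_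
  · filter_upwards [Filter.eventually_ge_atTop (0 : ℝ)] with t ht
    linarith [(main t ht).1]
  · filter_upwards [Filter.eventually_ge_atTop (0 : ℝ)] with t ht
    linarith [(main t ht).2]
end

section
/- Let w solve the un-normalized Ricci flow on a finite tree with curvature κ_{uv} = (2-d_u)/(w_{uv}D_u) + (2-d_v)/(w_{uv}D_v). Let e be a leaf edge and f = uv an internal edge sharing the vertex u (so d_v ≥ 2). Then d/dt (w_f(t) - w_e(t)) = w_e(t) + (d_v - 2)/D_v(t) > 0 for all t, i.e. w_f - w_e is strictly increasing along the flow. -/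
open Finset

/-- Along the flow, the difference between the weight of an internal edge `f = uv`
and that of a leaf edge `e = ux` at the same vertex `u` has derivative
`w_e + (d_v - 2)/D_v > 0`, hence is strictly increasing. -/
theorem stmt9 {V : Type*} [Fintype V] [DecidableEq V] (G : SimpleGraph V)
    [DecidableRel G.Adj] (hT : G.IsTree)
    (w : ℝ → V → V → ℝ)
    (hsymm : ∀ t u v, w t u v = w t v u)
    (hpos : ∀ t : ℝ, 0 ≤ t → ∀ u v, G.Adj u v → 0 < w t u v)
    (D : ℝ → V → ℝ) (hD : ∀ t u, D t u = ∑ v ∈ G.neighborFinset u, 1 / w t u v)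
    (κ : ℝ → V → V → ℝ)
    (hκ : ∀ t u v, G.Adj u v → κ t u v =
      (2 - (G.degree u : ℝ)) / (w t u v * D t u) + (2 - (G.degree v : ℝ)) / (w t u v * D t v))
    (hflow : ∀ u v, G.Adj u v → ∀ t : ℝ, 0 ≤ t →
      HasDerivAt (fun s => w s u v) (-(κ t u v) * w t u v) t)
    (u x v : V) (hux : G.Adj u x) (hx : G.degree x = 1)
    (huv : G.Adj u v) (hdv : 2 ≤ G.degree v) :
    (∀ t : ℝ, 0 ≤ t →
        HasDerivAt (fun s => w s u v - w s u x)
          (w t u x + ((G.degree v : ℝ) - 2) / D t v) t ∧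
        0 < w t u x + ((G.degree v : ℝ) - 2) / D t v) ∧
      StrictMonoOn (fun t => w t u v - w t u x) (Set.Ici (0 : ℝ)) := by
  -- neighborFinset x = {u}
  have hNx : G.neighborFinset x = {u} := by
    have hu : u ∈ G.neighborFinset x := by
      rw [SimpleGraph.mem_neighborFinset]; exact hux.symm
    have hc : (G.neighborFinset x).card = 1 := by
      rw [G.card_neighborFinset_eq_degree]; exact hx
    obtain ⟨a, ha⟩ := Finset.card_eq_one.mp hc
    rw [ha] at hu ⊢
    rw [Finset.mem_singleton.mp hu]
  have hDpos : ∀ t : ℝ, 0 ≤ t → ∀ y z, G.Adj y z → 0 < D t y := by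
    intro t ht y z hyz
    rw [hD]
    apply Finset.sum_pos
    · intro i hi
      exact div_pos one_pos (hpos t ht y i (SimpleGraph.mem_neighborFinset _ _ _ |>.mp hi))
    · exact ⟨z, (SimpleGraph.mem_neighborFinset _ _ _).mpr hyz⟩
  have hDx : ∀ t : ℝ, D t x = 1 / w t u x := by
    intro t
    rw [hD, hNx, Finset.sum_singleton, hsymm t x u]
  have main : ∀ t : ℝ, 0 ≤ t →
      HasDerivAt (fun s => w s u v - w s u x)
        (w t u x + ((G.degree v : ℝ) - 2) / D t v) t ∧
      0 < w t u x + ((G.degree v : ℝ) - 2) / D t v := by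
    intro t ht
    have hwe : 0 < w t u x := hpos t ht u x hux
    have hwv : 0 < w t u v := hpos t ht u v huv
    have hDu : 0 < D t u := hDpos t ht u v huv
    have hDv : 0 < D t v := hDpos t ht v u huv.symm
    have hder := (hflow u v huv t ht).sub (hflow u x hux t ht)
    have hval : -(κ t u v) * w t u v - -(κ t u x) * w t u x
        = w t u x + ((G.degree v : ℝ) - 2) / D t v := by
      rw [hκ t u v huv, hκ t u x hux, hDx t, hx]
      push_cast
      field_simp
      ring
    rw [hval] at hder
    refine ⟨hder, ?_⟩
    have h2 : (0:ℝ) ≤ ((G.degree v : ℝ) - 2) / D t v := by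
      apply div_nonneg _ hDv.le
      have : (2:ℝ) ≤ (G.degree v : ℝ) := by exact_mod_cast hdv
      linarith
    linarith
  refine ⟨main, ?_⟩
  apply strictMonoOn_of_deriv_pos (convex_Ici 0)
  · intro t ht
    exact ((main t ht).1).continuousAt.continuousWithinAt
  · intro t ht
    rw [interior_Ici] at ht
    have h := main t (le_of_lt ht)
    rw [h.1.deriv]
    exact h.2
end

section
/- Let e be a leaf edge incident to vertex u in a finite weighted tree, where u is incident to d_u' leaf edges and d_u'' internal edges with d_u = d_u' + d_u''. Suppose w_e ≥ w_g for every leaf edge g incident to u. Then the curvature κ_e = 1 - (d_u - 2)/(w_e D_u) satisfies κ_e > 1 - (d_u - 2)/d_u'. -/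
open Finset

/-- Static estimate: if the leaf edge `ux` has maximal weight among the leaf edges
at `u`, and `u` has at least one internal neighbor, then
`κ_e > 1 - (d_u - 2)/d_u'`. -/
theorem stmt10 {V : Type*} [Fintype V] [DecidableEq V] (G : SimpleGraph V)
    [DecidableRel G.Adj] (hT : G.IsTree)
    (w : V → V → ℝ) (hsymm : ∀ u v, w u v = w v u)
    (hpos : ∀ u v, G.Adj u v → 0 < w u v)
    (D : V → ℝ) (hD : ∀ u, D u = ∑ v ∈ G.neighborFinset u, 1 / w u v)
    (u x : V) (hux : G.Adj u x) (hx : G.degree x = 1) (hdu : 3 ≤ G.degree u)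
    (hinternal : ∃ y ∈ G.neighborFinset u, 2 ≤ G.degree y)
    (hmax : ∀ g ∈ (G.neighborFinset u).filter (fun y => G.degree y = 1), w u g ≤ w u x) :
    1 - ((G.degree u : ℝ) - 2) /
        (((G.neighborFinset u).filter (fun y => G.degree y = 1)).card : ℝ) <
      1 - ((G.degree u : ℝ) - 2) / (w u x * D u) := by
  set S := G.neighborFinset u with hS
  set L := S.filter (fun y => G.degree y = 1) with hL
  have hxS : x ∈ S := by simp [hS, hux]
  have hxL : x ∈ L := by simp [hL, hxS, hx]
  have hLpos : 0 < (L.card : ℝ) := by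
    exact_mod_cast Finset.card_pos.2 ⟨x, hxL⟩
  have hwD : w u x * D u = ∑ v ∈ S, w u x / w u v := by
    rw [hD, Finset.mul_sum]
    exact Finset.sum_congr rfl fun v _ => by ring
  have hkey : (L.card : ℝ) < w u x * D u := by
    rw [hwD, ← Finset.sum_filter_add_sum_filter_not S (fun y => G.degree y = 1)]
    have h1 : (L.card : ℝ) ≤ ∑ v ∈ L, w u x / w u v := by
      calc (L.card : ℝ) = ∑ _v ∈ L, (1 : ℝ) := by simp
        _ ≤ _ := Finset.sum_le_sum fun v hv => by
            have hvadj : G.Adj u v := by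
              have := Finset.mem_filter.1 hv
              exact (SimpleGraph.mem_neighborFinset _ _ _).1 this.1
            exact (one_le_div (hpos u v hvadj)).2 (hmax v hv)
    have h2 : 0 < ∑ v ∈ S.filter (fun y => ¬ G.degree y = 1), w u x / w u v := by
      obtain ⟨y, hyS, hy2⟩ := hinternal
      have hyadj : G.Adj u y := (SimpleGraph.mem_neighborFinset _ _ _).1 hyS
      refine Finset.sum_pos (fun v hv => ?_) ⟨y, Finset.mem_filter.2 ⟨hyS, by omega⟩⟩
      have hvadj : G.Adj u v := (SimpleGraph.mem_neighborFinset _ _ _).1 (Finset.mem_filter.1 hv).1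
      exact div_pos (hpos u x hux) (hpos u v hvadj)
    calc (L.card : ℝ) = (L.card : ℝ) + 0 := by ring
      _ < _ := by
        apply add_lt_add_of_le_of_lt h1 h2
  have hd2 : (0 : ℝ) < (G.degree u : ℝ) - 2 := by
    have : (3 : ℝ) ≤ (G.degree u : ℝ) := by exact_mod_cast hdu
    linarith
  have := div_lt_div_of_pos_left hd2 hLpos hkey
  linarith
end

section
/- In a finite tree that is not a caterpillar tree (equivalently, contains a vertex incident to at least three internal edges), there exist at least three distinct internal vertices v each of which is adjacent to exactly d_v - 1 leaves. -/
open Finset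

section Aux

variable {V : Type*} {G : SimpleGraph V}

/-- A shortest path realizing the distance. -/
private lemma exists_path_length_eq_dist [DecidableEq V] (hc : G.Connected) (u v : V) :
    ∃ p : G.Walk u v, p.IsPath ∧ p.length = G.dist u v := by
  obtain ⟨p, hp⟩ := hc.exists_walk_length_eq_dist u v
  refine ⟨p.bypass, p.bypass_isPath, le_antisymm ?_ (SimpleGraph.dist_le _)⟩
  exact hp ▸ p.length_bypass_le

/-- Appending an edge to a path avoiding the new endpoint gives a path. -/
private lemma isPath_concat [DecidableEq V] {u v w : V} {p : G.Walk u v} (hp : p.IsPath)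
    (h : G.Adj v w) (hw : w ∉ p.support) : (p.concat h).IsPath := by
  rw [← SimpleGraph.Walk.isPath_reverse_iff, SimpleGraph.Walk.reverse_concat]
  exact hp.reverse.cons (by simpa using hw)

/-- In a tree, a neighbor of `w` is at distance `dist v w ± 1` from `v`. -/
private lemma tree_adj_dist [DecidableEq V] (hT : G.IsTree) (v : V) {u w : V} (h : G.Adj u w) :
    G.dist v u + 1 = G.dist v w ∨ G.dist v w + 1 = G.dist v u := by
  have hc := hT.isConnected
  obtain ⟨p, hp, hlen⟩ := exists_path_length_eq_dist hc v u
  by_cases hw : w ∈ p.support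
  · right
    have h1 : G.dist v w ≤ (p.takeUntil w hw).length := SimpleGraph.dist_le _
    have h2 : (p.takeUntil w hw).length + (p.dropUntil w hw).length = p.length := by
      have := congrArg SimpleGraph.Walk.length (p.take_spec hw)
      rwa [SimpleGraph.Walk.length_append] at this
    have h3 : 1 ≤ (p.dropUntil w hw).length := by
      by_contra h3
      have : (p.dropUntil w hw).length = 0 := by omega
      have := SimpleGraph.Walk.eq_of_length_eq_zero this
      exact h.ne' this
    have h4 : G.dist v u ≤ G.dist v w + G.dist w u := hc.dist_triangle
    have h5 : G.dist w u = 1 := SimpleGraph.dist_eq_one_iff_adj.mpr h.symm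
    omega
  · left
    have hq : (p.concat h).IsPath := isPath_concat hp h hw
    obtain ⟨r, hr, hrlen⟩ := exists_path_length_eq_dist hc v w
    have := hT.IsAcyclic.path_unique ⟨p.concat h, hq⟩ ⟨r, hr⟩
    have hwalk : p.concat h = r := congrArg Subtype.val this
    have := congrArg SimpleGraph.Walk.length hwalk
    rw [SimpleGraph.Walk.length_concat] at this
    omega

/-- In a connected graph, a vertex at positive distance has a neighbor one
step closer. -/
private lemma exists_pred [DecidableEq V] (hc : G.Connected) {v w : V} (hd : 1 ≤ G.dist v w) :
    ∃ u, G.Adj u w ∧ G.dist v u + 1 = G.dist v w := by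
  obtain ⟨p, hp, hlen⟩ := exists_path_length_eq_dist hc v w
  have hnn : ¬ p.reverse.Nil := by
    rw [SimpleGraph.Walk.not_nil_iff_lt_length]
    simp only [SimpleGraph.Walk.length_reverse, hlen]; omega
  obtain ⟨u, h, q, hq⟩ := SimpleGraph.Walk.not_nil_iff.mp hnn
  have hqlen : q.length + 1 = G.dist v w := by
    have := congrArg SimpleGraph.Walk.length hq
    simpa [hlen] using this.symm
  have h1 : G.dist v u ≤ q.length := by
    have := SimpleGraph.dist_le q.reverse
    simpa [SimpleGraph.dist_comm] using this
  have h2 : G.dist v w ≤ G.dist v u + G.dist u w := hc.dist_triangle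
  have h3 : G.dist u w = 1 := SimpleGraph.dist_eq_one_iff_adj.mpr h.symm
  exact ⟨u, h.symm, by omega⟩

/-- In a tree, the neighbor one step closer is unique. -/
private lemma pred_unique [DecidableEq V] (hT : G.IsTree) (v : V) {w u₁ u₂ : V}
    (h₁ : G.Adj u₁ w) (h₂ : G.Adj u₂ w)
    (hd₁ : G.dist v u₁ + 1 = G.dist v w) (hd₂ : G.dist v u₂ + 1 = G.dist v w) :
    u₁ = u₂ := by
  have hc := hT.isConnected
  obtain ⟨p₁, hp₁, hlen₁⟩ := exists_path_length_eq_dist hc v u₁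
  obtain ⟨p₂, hp₂, hlen₂⟩ := exists_path_length_eq_dist hc v u₂
  have hw₁ : w ∉ p₁.support := by
    intro hw
    have h1 : G.dist v w ≤ (p₁.takeUntil w hw).length := SimpleGraph.dist_le _
    have h2 : (p₁.takeUntil w hw).length ≤ p₁.length :=
      SimpleGraph.Walk.length_takeUntil_le _ _
    omega
  have hw₂ : w ∉ p₂.support := by
    intro hw
    have h1 : G.dist v w ≤ (p₂.takeUntil w hw).length := SimpleGraph.dist_le _
    have h2 : (p₂.takeUntil w hw).length ≤ p₂.length :=
      SimpleGraph.Walk.length_takeUntil_le _ _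
    omega
  have hq₁ : (p₁.concat h₁).IsPath := isPath_concat hp₁ h₁ hw₁
  have hq₂ : (p₂.concat h₂).IsPath := isPath_concat hp₂ h₂ hw₂
  have := hT.IsAcyclic.path_unique ⟨p₁.concat h₁, hq₁⟩ ⟨p₂.concat h₂, hq₂⟩
  have hwalk : p₁.concat h₁ = p₂.concat h₂ := congrArg Subtype.val this
  obtain ⟨hv, -⟩ := SimpleGraph.Walk.concat_inj hwalk
  exact hv

end Aux

/-- In a finite non-caterpillar tree (a tree containing a vertex incident to at
least three internal edges), there are at least three distinct internal vertices
each adjacent to exactly `d_v - 1` leaves. -/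
theorem stmt12 {V : Type*} [Fintype V] [DecidableEq V] (G : SimpleGraph V)
    [DecidableRel G.Adj] (hT : G.IsTree)
    (v₀ : V)
    (hnc : 3 ≤ ((G.neighborFinset v₀).filter (fun y => 2 ≤ G.degree y)).card) :
    ∃ S : Finset V, 3 ≤ S.card ∧ ∀ v ∈ S, 2 ≤ G.degree v ∧
      ((G.neighborFinset v).filter (fun y => G.degree y = 1)).card = G.degree v - 1 := by
  classical
  have hc := hT.isConnected
  have hdeg₀ : 3 ≤ G.degree v₀ := le_trans hnc (by
    rw [← SimpleGraph.card_neighborFinset_eq_degree]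
    exact Finset.card_le_card (Finset.filter_subset _ _))
  -- the branch of an internal neighbor `y` of `v₀`
  set B : V → Finset V := fun y =>
    Finset.univ.filter (fun w => 2 ≤ G.degree w ∧ G.dist y w + 1 = G.dist v₀ w)
    with hB
  have hmemB : ∀ {y w}, w ∈ B y ↔ 2 ≤ G.degree w ∧ G.dist y w + 1 = G.dist v₀ w := by
    intro y w; simp [hB]
  -- key: a maximizer of distance in a branch has the desired property
  have hkey : ∀ y, G.Adj v₀ y → 2 ≤ G.degree y →
      ∃ w ∈ B y, (2 ≤ G.degree w ∧
        ((G.neighborFinset w).filter (fun z => G.degree z = 1)).card = G.degree w - 1) := by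
    intro y hady hdegy
    have hyB : y ∈ B y := hmemB.mpr ⟨hdegy, by
      simp [SimpleGraph.dist_eq_one_iff_adj.mpr hady]⟩
    obtain ⟨w, hwB, hmax⟩ := Finset.exists_max_image (B y) (fun w => G.dist v₀ w) ⟨y, hyB⟩
    obtain ⟨hdegw, hdistw⟩ := hmemB.mp hwB
    refine ⟨w, hwB, hdegw, ?_⟩
    -- the predecessor of w
    obtain ⟨u, hadjuw, hdistu⟩ := exists_pred hc (v := v₀) (w := w) (by omega)
    -- the predecessor has degree ≥ 2
    have hdegu : 2 ≤ G.degree u := by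
      rcases Nat.eq_zero_or_pos (G.dist v₀ u) with h0 | hpos
      · have hcomm : G.dist u v₀ = G.dist v₀ u := SimpleGraph.dist_comm
        have : u = v₀ := (hc.dist_eq_zero_iff).mp (hcomm.trans h0)
        rw [this]; omega
      · obtain ⟨u', hadju', hdistu'⟩ := exists_pred hc (v := v₀) (w := u) hpos
        have hne : u' ≠ w := by
          intro h; subst h; omega
        have : ({u', w} : Finset V) ⊆ G.neighborFinset u := by
          intro z hz
          simp only [Finset.mem_insert, Finset.mem_singleton] at hz
          rcases hz with rfl | rfl
          · simpa [SimpleGraph.mem_neighborFinset] using hadju'.symm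
          · simpa [SimpleGraph.mem_neighborFinset] using hadjuw
        have h2 : ({u', w} : Finset V).card = 2 := Finset.card_pair hne
        calc 2 = ({u', w} : Finset V).card := h2.symm
          _ ≤ (G.neighborFinset u).card := Finset.card_le_card this
          _ = G.degree u := G.card_neighborFinset_eq_degree u
    -- all other neighbors of w are leaves
    have hfilter : (G.neighborFinset w).filter (fun z => G.degree z = 1)
        = (G.neighborFinset w).erase u := by
      apply Finset.ext
      intro z
      simp only [Finset.mem_filter, Finset.mem_erase, SimpleGraph.mem_neighborFinset]
      constructor
      · rintro ⟨hadj, hdz⟩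
        refine ⟨fun h => ?_, hadj⟩
        subst h; omega
      · rintro ⟨hne, hadj⟩
        refine ⟨hadj, ?_⟩
        rcases tree_adj_dist hT v₀ hadj.symm with hcase | hcase
        · exact absurd (pred_unique hT v₀ hadj.symm hadjuw hcase hdistu) hne
        · -- z is farther; if internal it would be in the branch, contradicting maximality
          by_contra hdz
          have hdz1 : 1 ≤ G.degree z := by
            have : w ∈ G.neighborFinset z := by
              simpa [SimpleGraph.mem_neighborFinset] using hadj.symm
            have := Finset.card_pos.mpr ⟨w, this⟩
            simp only [SimpleGraph.card_neighborFinset_eq_degree] at this; omega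
          have hdz2 : 2 ≤ G.degree z := by omega
          have hyz : G.dist y z + 1 = G.dist v₀ z := by
            have t1 : G.dist y z ≤ G.dist y w + G.dist w z := hc.dist_triangle
            have t2 : G.dist v₀ z ≤ G.dist v₀ y + G.dist y z := hc.dist_triangle
            have t3 : G.dist w z = 1 := SimpleGraph.dist_eq_one_iff_adj.mpr hadj
            have t4 : G.dist v₀ y = 1 := SimpleGraph.dist_eq_one_iff_adj.mpr hady
            omega
          have hzB : z ∈ B y := hmemB.mpr ⟨hdz2, hyz⟩
          have := hmax z hzB
          omega
    rw [hfilter, Finset.card_erase_of_mem (by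
      simpa [SimpleGraph.mem_neighborFinset] using hadjuw.symm),
      SimpleGraph.card_neighborFinset_eq_degree]
  -- pick three distinct internal neighbors of v₀
  obtain ⟨y₁, y₂, y₃, hy₁, hy₂, hy₃, h12, h13, h23⟩ :=
    Finset.two_lt_card_iff.mp (lt_of_lt_of_le (by norm_num) hnc)
  simp only [Finset.mem_filter, SimpleGraph.mem_neighborFinset] at hy₁ hy₂ hy₃
  obtain ⟨w₁, hw₁B, hw₁⟩ := hkey y₁ hy₁.1 hy₁.2
  obtain ⟨w₂, hw₂B, hw₂⟩ := hkey y₂ hy₂.1 hy₂.2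
  obtain ⟨w₃, hw₃B, hw₃⟩ := hkey y₃ hy₃.1 hy₃.2
  -- distinctness: a vertex lies in at most one branch
  have hbranch : ∀ {y y' w}, G.Adj v₀ y → G.Adj v₀ y' → w ∈ B y → w ∈ B y' → y = y' := by
    intro y y' w hy hy' hwB hwB'
    obtain ⟨-, hd⟩ := hmemB.mp hwB
    obtain ⟨-, hd'⟩ := hmemB.mp hwB'
    have c1 : G.dist w y = G.dist y w := SimpleGraph.dist_comm
    have c1' : G.dist w y' = G.dist y' w := SimpleGraph.dist_comm
    have c2 : G.dist w v₀ = G.dist v₀ w := SimpleGraph.dist_comm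
    exact pred_unique hT w (w := v₀) hy.symm hy'.symm (by omega) (by omega)
  have hw12 : w₁ ≠ w₂ := fun h => h12 (hbranch hy₁.1 hy₂.1 hw₁B (h ▸ hw₂B))
  have hw13 : w₁ ≠ w₃ := fun h => h13 (hbranch hy₁.1 hy₃.1 hw₁B (h ▸ hw₃B))
  have hw23 : w₂ ≠ w₃ := fun h => h23 (hbranch hy₂.1 hy₃.1 hw₂B (h ▸ hw₃B))
  refine ⟨{w₁, w₂, w₃}, ?_, ?_⟩
  · rw [Finset.card_insert_of_notMem (by simp [hw12, hw13]),
      Finset.card_insert_of_notMem (by simp [hw23]), Finset.card_singleton]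
  · intro v hv
    simp only [Finset.mem_insert, Finset.mem_singleton] at hv
    rcases hv with rfl | rfl | rfl
    · exact hw₁
    · exact hw₂
    · exact hw₃
end

section
/- For a leaf edge e at vertex u with curvature κ_e = 1 - (d_u - 2)/(w_e D_u) and all incident weights evolving by w_{uv}' = -κ_{uv} w_{uv}, the derivative of the curvature satisfies κ_e'(t) = (d_u - 2)/(w_e D_u) · ( (Σ_{v∼u} κ_{uv}/w_{uv}) / (Σ_{v∼u} 1/w_{uv}) - κ_e ). -/
open Finset

/-- Derivative of the curvature of a leaf edge `e = ux` along the flow. -/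
theorem stmt17 {V : Type*} [Fintype V] [DecidableEq V] (G : SimpleGraph V)
    [DecidableRel G.Adj] (hT : G.IsTree)
    (w : ℝ → V → V → ℝ)
    (hpos : ∀ t : ℝ, ∀ u v, G.Adj u v → 0 < w t u v)
    (D : ℝ → V → ℝ) (hD : ∀ t u, D t u = ∑ v ∈ G.neighborFinset u, 1 / w t u v)
    (κ : ℝ → V → V → ℝ)
    (u x : V) (hux : G.Adj u x) (hx : G.degree x = 1) (hdu : 2 ≤ G.degree u)
    (hκe : ∀ t : ℝ, κ t u x = 1 - ((G.degree u : ℝ) - 2) / (w t u x * D t u))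
    (hflow : ∀ v ∈ G.neighborFinset u, ∀ t : ℝ,
      HasDerivAt (fun s => w s u v) (-(κ t u v) * w t u v) t) :
    ∀ t : ℝ,
      HasDerivAt (fun s => κ s u x)
        (((G.degree u : ℝ) - 2) / (w t u x * D t u) *
          ((∑ v ∈ G.neighborFinset u, κ t u v / w t u v) /
              (∑ v ∈ G.neighborFinset u, 1 / w t u v) - κ t u x)) t := by
  intro t
  have hWx : 0 < w t u x := hpos t u x hux
  have hxN : x ∈ G.neighborFinset u := by simpa using hux
  have hDpos : 0 < D t u := by
    rw [hD t u]
    refine Finset.sum_pos (fun v hv => ?_) ⟨x, hxN⟩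
    have := hpos t u v (by simpa using hv)
    positivity
  have hWD : w t u x * D t u ≠ 0 := (mul_pos hWx hDpos).ne'
  have hDdiff : HasDerivAt (fun s => D s u)
      (∑ v ∈ G.neighborFinset u, κ t u v / w t u v) t := by
    have heq : (fun s => D s u) = fun s => ∑ v ∈ G.neighborFinset u, 1 / w s u v :=
      funext fun s => hD s u
    rw [heq]
    refine HasDerivAt.fun_sum fun v hv => ?_
    have hne : w t u v ≠ 0 := (hpos t u v (by simpa using hv)).ne'
    simp only [one_div]
    refine ((hflow v hv t).inv hne).congr_deriv (Eq.symm ?_)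
    field_simp
  have hWdiff := hflow x hxN t
  have hprod := hWdiff.fun_mul hDdiff
  have hdiv := (hasDerivAt_const t ((G.degree u : ℝ) - 2)).fun_div hprod hWD
  have hfinal := hdiv.const_sub 1
  have heq2 : (fun s => 1 - ((G.degree u : ℝ) - 2) / (w s u x * D s u))
      = fun s => κ s u x := funext fun s => (hκe s).symm
  rw [heq2] at hfinal
  refine hfinal.congr_deriv (Eq.symm ?_)
  have hS : (∑ v ∈ G.neighborFinset u, 1 / w t u v) ≠ 0 := by
    rw [← hD t u]; exact hDpos.ne'
  rw [hκe t]
  rw [hD t u] at hWD ⊢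
  field_simp
  ring
end

section
/- Let w solve the un-normalized Ricci flow w_h' = -κ_h w_h on a finite tree with κ_{uv} = (2-d_u)/(w_{uv}D_u) + (2-d_v)/(w_{uv}D_v), and let f be an internal edge. If lim_{t→∞} w_f(t) exists and is finite, and the derivative κ_f' is bounded on [0,∞), then lim_{t→∞} κ_f(t) = 0. -/
open Finset

/-- If the weight of an internal edge converges to a finite limit under the
Ricci flow and its curvature has bounded derivative, then the curvature tends
to zero. -/
theorem stmt19 {V : Type*} [Fintype V] [DecidableEq V] (G : SimpleGraph V)
    [DecidableRel G.Adj] (hT : G.IsTree)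
    (w : ℝ → V → V → ℝ)
    (hsymm : ∀ t u v, w t u v = w t v u)
    (hpos : ∀ t : ℝ, 0 ≤ t → ∀ u v, G.Adj u v → 0 < w t u v)
    (D : ℝ → V → ℝ) (hD : ∀ t u, D t u = ∑ v ∈ G.neighborFinset u, 1 / w t u v)
    (κ : ℝ → V → V → ℝ)
    (hκ : ∀ t u v, G.Adj u v → κ t u v =
      (2 - (G.degree u : ℝ)) / (w t u v * D t u) + (2 - (G.degree v : ℝ)) / (w t u v * D t v))
    (hflow : ∀ u v, G.Adj u v → ∀ t : ℝ, 0 ≤ t →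
      HasDerivAt (fun s => w s u v) (-(κ t u v) * w t u v) t)
    (u v : V) (huv : G.Adj u v) (hdu : 2 ≤ G.degree u) (hdv : 2 ≤ G.degree v)
    (L : ℝ) (hlim : Filter.Tendsto (fun t => w t u v) Filter.atTop (nhds L))
    (hκdiff : ∀ t : ℝ, 0 ≤ t → DifferentiableAt ℝ (fun s => κ s u v) t)
    (hκbd : ∃ M : ℝ, ∀ t : ℝ, 0 ≤ t → |deriv (fun s => κ s u v) t| ≤ M) :
    Filter.Tendsto (fun t => κ t u v) Filter.atTop (nhds 0) := by
  have hw0 : 0 < w 0 u v := hpos 0 le_rfl u v huv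
  set w0 := w 0 u v with hw0def
  -- D positive
  have hDpos : ∀ t : ℝ, 0 ≤ t → ∀ x : V, 0 < G.degree x → 0 < D t x := by
    intro t ht x hx
    rw [hD]
    apply Finset.sum_pos
    · intro y hy
      exact div_pos one_pos (hpos t ht x y ((SimpleGraph.mem_neighborFinset G x y).mp hy))
    · rw [← Finset.card_pos]
      rwa [G.card_neighborFinset_eq_degree]
  -- κ nonpositive
  have hκnp : ∀ t : ℝ, 0 ≤ t → κ t u v ≤ 0 := by
    intro t ht
    rw [hκ t u v huv]
    have hw := hpos t ht u v huv
    have hDu := hDpos t ht u (by omega)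
    have hDv := hDpos t ht v (by omega)
    have h1 : (2 - (G.degree u : ℝ)) ≤ 0 := by
      have : (2:ℝ) ≤ (G.degree u : ℝ) := by exact_mod_cast hdu
      linarith
    have h2 : (2 - (G.degree v : ℝ)) ≤ 0 := by
      have : (2:ℝ) ≤ (G.degree v : ℝ) := by exact_mod_cast hdv
      linarith
    have := div_nonpos_of_nonpos_of_nonneg h1 (mul_pos hw hDu).le
    have := div_nonpos_of_nonpos_of_nonneg h2 (mul_pos hw hDv).le
    linarith
  have hwderiv : ∀ t : ℝ, 0 ≤ t → HasDerivAt (fun s => w s u v) (-(κ t u v) * w t u v) t :=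
    fun t ht => hflow u v huv t ht
  -- w monotone on [0, ∞)
  have hwmono : MonotoneOn (fun t => w t u v) (Set.Ici (0:ℝ)) := by
    apply monotoneOn_of_deriv_nonneg (convex_Ici 0)
    · exact fun t ht => (hwderiv t ht).continuousAt.continuousWithinAt
    · intro t ht
      rw [interior_Ici] at ht
      exact (hwderiv t ht.le).differentiableAt.differentiableWithinAt
    · intro t ht
      rw [interior_Ici] at ht
      rw [(hwderiv t ht.le).deriv]
      have h1 := hκnp t ht.le
      have h2 := hpos t ht.le u v huv
      nlinarith
  have hwlow : ∀ t : ℝ, 0 ≤ t → w0 ≤ w t u v :=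
    fun t ht => hwmono Set.self_mem_Ici ht ht
  have hwle : ∀ t : ℝ, 0 ≤ t → w t u v ≤ L := by
    intro t ht
    apply ge_of_tendsto hlim
    filter_upwards [Filter.eventually_ge_atTop t] with s hs
    exact hwmono ht (ht.trans hs) hs
  obtain ⟨M, hM⟩ := hκbd
  set M' := max M 1 with hM'def
  have hM' : (0:ℝ) < M' := lt_of_lt_of_le one_pos (le_max_right _ _)
  -- Lipschitz bound for κ on [0, ∞)
  have hlip : ∀ s t : ℝ, 0 ≤ t → t ≤ s → |κ s u v - κ t u v| ≤ M' * (s - t) := by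
    intro s t ht hts
    have key := norm_image_sub_le_of_norm_deriv_le_segment'
      (f := fun r => κ r u v) (f' := deriv (fun r => κ r u v)) (a := t) (b := s) (C := M')
      (fun x hx => (hκdiff x (ht.trans hx.1)).hasDerivAt.hasDerivWithinAt)
      (fun x hx => le_trans (hM x (ht.trans hx.1)) (le_max_left _ _))
      s (Set.right_mem_Icc.mpr hts)
    simpa [Real.norm_eq_abs] using key
  rw [Metric.tendsto_atTop]
  intro ε hε
  set δ := ε / (4 * M') with hδdef
  have hδ : 0 < δ := div_pos hε (by positivity)
  set c := ε / 2 * w0 with hcdef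
  have hc : 0 < c := by positivity
  obtain ⟨N, hN⟩ := (Metric.tendsto_atTop.mp hlim) (c * δ) (by positivity)
  refine ⟨max N 0, fun t ht => ?_⟩
  have htN : N ≤ t := le_trans (le_max_left _ _) ht
  have ht0 : (0:ℝ) ≤ t := le_trans (le_max_right _ _) ht
  by_contra hcon
  push_neg at hcon
  rw [Real.dist_eq, sub_zero] at hcon
  have hg : ε ≤ -(κ t u v) := by
    have h := hκnp t ht0
    rw [abs_of_nonpos h] at hcon
    linarith
  have key : ∀ s ∈ Set.Icc t (t + δ), ε / 2 ≤ -(κ s u v) := by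
    intro s hs
    have h1 := hlip s t ht0 hs.1
    have h2 : |κ s u v - κ t u v| ≤ M' * δ := by
      refine le_trans h1 ?_
      have := hs.2
      nlinarith
    have hMδ : M' * δ = ε / 4 := by
      rw [hδdef]; field_simp
    rw [hMδ] at h2
    have h3 := (abs_le.mp h2).2
    linarith
  -- auxiliary monotone function
  have hderivAux : ∀ s : ℝ, 0 ≤ s →
      HasDerivAt (fun r => w r u v - c * r) (-(κ s u v) * w s u v - c) s := by
    intro s hs
    have h1 := hwderiv s hs
    have h2 : HasDerivAt (fun r : ℝ => c * r) c s := by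
      simpa using (hasDerivAt_id s).const_mul c
    exact h1.sub h2
  have haux : MonotoneOn (fun s => w s u v - c * s) (Set.Icc t (t + δ)) := by
    apply monotoneOn_of_deriv_nonneg (convex_Icc _ _)
    · intro s hs
      exact (hderivAux s (le_trans ht0 hs.1)).continuousAt.continuousWithinAt
    · intro s hs
      rw [interior_Icc] at hs
      exact (hderivAux s (le_trans ht0 hs.1.le)).differentiableAt.differentiableWithinAt
    · intro s hs
      rw [interior_Icc] at hs
      have hs0 : (0:ℝ) ≤ s := le_trans ht0 hs.1.le
      rw [(hderivAux s hs0).deriv]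
      have h1 := key s ⟨hs.1.le, hs.2.le⟩
      have h2 := hwlow s hs0
      have h3 := hpos s hs0 u v huv
      have h4 : ε / 2 * w0 ≤ -(κ s u v) * w s u v := by nlinarith
      rw [hcdef]
      linarith
  have hineq := haux (Set.left_mem_Icc.mpr (by linarith)) (Set.right_mem_Icc.mpr (by linarith)) (by linarith)
  simp only at hineq
  have h5 : w t u v + c * δ ≤ w (t + δ) u v := by nlinarith
  have h6 := hwle (t + δ) (by linarith)
  have h7 := hN t htN
  rw [Real.dist_eq] at h7
  have h8 := (abs_lt.mp h7).1
  linarith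
end
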